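/- Let p(·) : ℝⁿ → (0,∞) satisfy the globally log-Hölder continuity conditions: there exist constants C_log, C_∞ > 0 and p_∞ ∈ ℝ such that |p(x) − p(y)| ≤ C_log / log(e + 1/|x−y|) for all x, y, and |p(x) − p_∞| ≤ C_∞ / log(e + |x|) for all x. Assume 0 < p₋ ≤ p₊ < ∞. Then there is a constant C ≥ 1 such that for all balls B₁ ⊂ B₂ of ℝⁿ, C^{-1} (|B₁|/|B₂|)^{1/p₋} ≤ ‖χ_{B₁}‖_{L^{p(·)}} / ‖χ_{B₂}‖_{L^{p(·)}} ≤ C (|B₁|/|B₂|)^{1/p₊}. -/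

import Mathlib

open MeasureTheory ENNReal Set

/-- The Luxemburg quasi-norm on the variable Lebesgue space `L^{p(·)}(ℝⁿ)`. -/
noncomputable def luxNorm {n : ℕ} (p : EuclideanSpace ℝ (Fin n) → ℝ)
    (f : EuclideanSpace ℝ (Fin n) → ℝ) : ℝ :=
  sInf {l : ℝ | 0 < l ∧ ∫⁻ x, ENNReal.ofReal ((|f x| / l) ^ p x) ≤ 1}

section Aux

variable {n : ℕ}

private lemma modular_rw (p : EuclideanSpace ℝ (Fin n) → ℝ) (hpos : ∀ x, 0 < p x)
    (B : Set (EuclideanSpace ℝ (Fin n))) (hB : MeasurableSet B) (l : ℝ) :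
    ∫⁻ x, ENNReal.ofReal ((|B.indicator (fun _ => (1:ℝ)) x| / l) ^ p x) =
      ∫⁻ x in B, ENNReal.ofReal ((1 / l) ^ p x) := by
  rw [← lintegral_indicator hB]
  congr 1; funext x
  by_cases hx : x ∈ B
  · simp [hx]
  · simp [hx, Real.zero_rpow (hpos x).ne']

private lemma luxNorm_le (p : EuclideanSpace ℝ (Fin n) → ℝ) (hpos : ∀ x, 0 < p x)
    (B : Set (EuclideanSpace ℝ (Fin n))) (hB : MeasurableSet B) {l : ℝ} (hl : 0 < l)
    (hmod : ∫⁻ x in B, ENNReal.ofReal ((1 / l) ^ p x) ≤ 1) :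
    luxNorm p (B.indicator fun _ => 1) ≤ l := by
  apply csInf_le ⟨0, fun m hm => hm.1.le⟩
  exact ⟨hl, by rw [modular_rw p hpos B hB]; exact hmod⟩

private lemma modular_anti (p : EuclideanSpace ℝ (Fin n) → ℝ) (hpos : ∀ x, 0 < p x)
    (B : Set (EuclideanSpace ℝ (Fin n))) {m l : ℝ} (hm : 0 < m) (hml : m ≤ l) :
    ∫⁻ x in B, ENNReal.ofReal ((1 / l) ^ p x) ≤ ∫⁻ x in B, ENNReal.ofReal ((1 / m) ^ p x) := by
  have hl : 0 < l := lt_of_lt_of_le hm hml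
  refine lintegral_mono fun x => ENNReal.ofReal_le_ofReal ?_
  exact Real.rpow_le_rpow (by positivity) (one_div_le_one_div_of_le hm hml) (hpos x).le

private lemma le_luxNorm (p : EuclideanSpace ℝ (Fin n) → ℝ) (hpos : ∀ x, 0 < p x)
    (B : Set (EuclideanSpace ℝ (Fin n))) (hB : MeasurableSet B) {l₀ l : ℝ}
    (hl₀ : 0 < l₀) (hmod₀ : ∫⁻ x in B, ENNReal.ofReal ((1 / l₀) ^ p x) ≤ 1)
    (hl : 0 < l) (hmod : 1 < ∫⁻ x in B, ENNReal.ofReal ((1 / l) ^ p x)) :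
    l ≤ luxNorm p (B.indicator fun _ => 1) := by
  have hl₀mem : l₀ ∈ {l : ℝ | 0 < l ∧
      ∫⁻ x, ENNReal.ofReal ((|B.indicator (fun _ => (1:ℝ)) x| / l) ^ p x) ≤ 1} :=
    ⟨hl₀, by rw [modular_rw p hpos B hB]; exact hmod₀⟩
  apply le_csInf ⟨l₀, hl₀mem⟩
  rintro m ⟨hm, hmmod⟩
  rw [modular_rw p hpos B hB] at hmmod
  by_contra h
  push_neg at h
  exact absurd (le_trans (modular_anti p hpos B hm h.le) hmmod) (not_le.2 hmod)

private lemma setmod_le (p : EuclideanSpace ℝ (Fin n) → ℝ)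
    {S : Set (EuclideanSpace ℝ (Fin n))} (hS : MeasurableSet S) {l c : ℝ}
    (hc : ∀ x ∈ S, (1 / l) ^ p x ≤ c) :
    ∫⁻ x in S, ENNReal.ofReal ((1 / l) ^ p x) ≤ ENNReal.ofReal c * volume S := by
  calc ∫⁻ x in S, ENNReal.ofReal ((1 / l) ^ p x)
      ≤ ∫⁻ _ in S, ENNReal.ofReal c :=
        setLIntegral_mono' hS fun x hx => ENNReal.ofReal_le_ofReal (hc x hx)
    _ = ENNReal.ofReal c * volume S := by rw [setLIntegral_const]

private lemma le_setmod (p : EuclideanSpace ℝ (Fin n) → ℝ)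
    {S : Set (EuclideanSpace ℝ (Fin n))} (hS : MeasurableSet S) {l c : ℝ}
    (hc : ∀ x ∈ S, c ≤ (1 / l) ^ p x) :
    ENNReal.ofReal c * volume S ≤ ∫⁻ x in S, ENNReal.ofReal ((1 / l) ^ p x) := by
  calc ENNReal.ofReal c * volume S = ∫⁻ _ in S, ENNReal.ofReal c := by rw [setLIntegral_const]
    _ ≤ ∫⁻ x in S, ENNReal.ofReal ((1 / l) ^ p x) :=
        setLIntegral_mono' hS fun x hx => ENNReal.ofReal_le_ofReal (hc x hx)

private lemma ball_vol (x₀ : EuclideanSpace ℝ (Fin n)) {r : ℝ} (hr : 0 < r) :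
    volume (Metric.ball x₀ r) =
      ENNReal.ofReal (r ^ n * (volume (Metric.ball (0 : EuclideanSpace ℝ (Fin n)) 1)).toReal) ∧
    0 < r ^ n * (volume (Metric.ball (0 : EuclideanSpace ℝ (Fin n)) 1)).toReal := by
  have h1 : volume (Metric.ball x₀ r) =
      ENNReal.ofReal (r ^ n) * volume (Metric.ball (0 : EuclideanSpace ℝ (Fin n)) 1) := by
    rw [Measure.addHaar_ball_of_pos _ _ hr, finrank_euclideanSpace_fin]
  have hfin : volume (Metric.ball (0 : EuclideanSpace ℝ (Fin n)) 1) ≠ ∞ :=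
    measure_ball_lt_top.ne
  have hpos : 0 < (volume (Metric.ball (0 : EuclideanSpace ℝ (Fin n)) 1)).toReal :=
    ENNReal.toReal_pos (Metric.measure_ball_pos _ _ one_pos).ne' hfin
  refine ⟨?_, by positivity⟩
  rw [h1, ENNReal.ofReal_mul (by positivity), ENNReal.ofReal_toReal hfin]

end Aux

private lemma aux_rpow {A v s : ℝ} (t : ℝ) (hA : 0 < A) (hv : 0 < v) (hs : 0 < s) :
    (1 / (A * v ^ (1 / s))) ^ t = A ^ (-t) * (v⁻¹ * v ^ ((s - t) / s)) := by
  have hw : (0:ℝ) < v ^ (1 / s) := Real.rpow_pos_of_pos hv _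
  have h1 : v⁻¹ * v ^ ((s - t) / s) = v ^ (-(t / s)) := by
    rw [← Real.rpow_neg_one v, ← Real.rpow_add hv]
    congr 1
    field_simp
    ring
  have h2 : (v ^ (1/s)) ^ (-t) = v ^ (-(t/s)) := by
    rw [← Real.rpow_mul hv.le]
    congr 1
    field_simp
  rw [h1, ← h2, one_div, mul_inv, ← Real.rpow_neg_one A, ← Real.rpow_neg_one (v ^ (1/s)),
    Real.mul_rpow (by positivity) (by positivity),
    ← Real.rpow_mul hA.le, ← Real.rpow_mul hw.le]
  norm_num

private lemma rpow_bounds {v t K : ℝ} (hv : 0 < v) (h : |t * Real.log v| ≤ K) :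
    Real.exp (-K) ≤ v ^ t ∧ v ^ t ≤ Real.exp K := by
  rw [Real.rpow_def_of_pos hv]
  obtain ⟨h1, h2⟩ := abs_le.1 h
  constructor <;> apply Real.exp_le_exp.2 <;> nlinarith [mul_comm t (Real.log v)]

private lemma exp_rpow_eq (t q : ℝ) : (Real.exp t) ^ q = Real.exp (t * q) := by
  rw [Real.rpow_def_of_pos (Real.exp_pos t), Real.log_exp]

set_option maxHeartbeats 2000000 in
private lemma small_ball_norm {n : ℕ} (p : EuclideanSpace ℝ (Fin n) → ℝ)
    (pm : ℝ) (hpm : 0 < pm) (hr1 : ∀ x, pm ≤ p x)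
    (Clog : ℝ) (hClog : 0 < Clog)
    (hlogHolder : ∀ x y, x ≠ y → |p x - p y| ≤ Clog / Real.log (Real.exp 1 + 1 / dist x y)) :
    ∃ K : ℝ, 1 ≤ K ∧ ∀ (x₀ z : EuclideanSpace ℝ (Fin n)) (r : ℝ), 0 < r →
      z ∈ Metric.ball x₀ r → (volume (Metric.ball x₀ r)).toReal ≤ 1 →
      K⁻¹ * (volume (Metric.ball x₀ r)).toReal ^ (1 / p z) ≤
        luxNorm p ((Metric.ball x₀ r).indicator fun _ => 1) ∧
      luxNorm p ((Metric.ball x₀ r).indicator fun _ => 1) ≤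
        K * (volume (Metric.ball x₀ r)).toReal ^ (1 / p z) := by
  have hpos : ∀ x, 0 < p x := fun x => lt_of_lt_of_le hpm (hr1 x)
  set c : ℝ := (volume (Metric.ball (0 : EuclideanSpace ℝ (Fin n)) 1)).toReal with hc
  set K₂ : ℝ := (Clog / pm) * (|Real.log c| + n * Real.log 2 + n) with hK₂def
  have hK₂0 : 0 ≤ K₂ := by
    apply mul_nonneg (by positivity)
    have h2 : (0:ℝ) ≤ Real.log 2 := Real.log_nonneg (by norm_num)
    positivity
  set A : ℝ := max 1 (Real.exp (K₂ / pm)) with hAdef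
  have hA1 : (1:ℝ) ≤ A := le_max_left _ _
  have hApos : (0:ℝ) < A := lt_of_lt_of_le one_pos hA1
  have hApow : Real.exp K₂ ≤ A ^ pm := by
    calc Real.exp K₂ = (Real.exp (K₂ / pm)) ^ pm := by
          rw [exp_rpow_eq]; congr 1; field_simp
      _ ≤ A ^ pm := Real.rpow_le_rpow (Real.exp_pos _).le (le_max_right _ _) hpm.le
  set a : ℝ := (Real.exp ((K₂ + 1) / pm))⁻¹ with hadef
  have ha : 0 < a := by positivity
  have ha1 : a ≤ 1 := by
    rw [hadef]
    apply inv_le_one_of_one_le₀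
    exact Real.one_le_exp (by positivity)
  have hapow : a ^ (-pm : ℝ) = Real.exp (K₂ + 1) := by
    rw [hadef, ← Real.rpow_neg_one (Real.exp ((K₂ + 1) / pm)), ← Real.rpow_mul (Real.exp_pos _).le,
      exp_rpow_eq]
    congr 1
    field_simp
  refine ⟨max A a⁻¹, le_trans hA1 (le_max_left _ _), ?_⟩
  intro x₀ z r hr hz hv1
  obtain ⟨hvol, hv0⟩ := ball_vol x₀ hr
  set B := Metric.ball x₀ r with hBdef
  set v : ℝ := (volume B).toReal with hvdef
  have hvv : v = r ^ n * c := by rw [hvdef, hvol, ENNReal.toReal_ofReal hv0.le]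
  have hv0' : 0 < v := hvv ▸ hv0
  have hvol' : volume B = ENNReal.ofReal v := by rw [hvol, ← hvv]
  have hpz : 0 < p z := hpos z
  set L : ℝ := Real.log (Real.exp 1 + 1 / (2 * r)) with hLdef
  have hL1 : 1 ≤ L := by
    have h2r : (0:ℝ) < 1 / (2 * r) := by positivity
    have h := Real.log_le_log (Real.exp_pos 1) (show Real.exp 1 ≤ Real.exp 1 + 1/(2*r) by linarith)
    rwa [Real.log_exp] at h
  have hL0 : (0:ℝ) < L := lt_of_lt_of_le one_pos hL1
  -- pointwise exponent estimate
  have hest : ∀ x ∈ B, |((p z - p x) / p z) * Real.log v| ≤ K₂ := by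
    intro x hx
    have hd : |p z - p x| * L ≤ Clog := by
      by_cases hxz : x = z
      · subst hxz; simp [hClog.le]
      · have hne : z ≠ x := Ne.symm hxz
        have h := hlogHolder z x hne
        have hdist0 : 0 < dist z x := dist_pos.2 hne
        have hdist : dist z x < 2 * r := by
          have h1 := Metric.mem_ball.1 hz
          have h2 := Metric.mem_ball.1 hx
          calc dist z x ≤ dist z x₀ + dist x₀ x := dist_triangle _ _ _
            _ < 2 * r := by rw [dist_comm x₀ x]; linarith
        have hL' : L ≤ Real.log (Real.exp 1 + 1 / dist z x) := by
          apply Real.log_le_log (by positivity)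
          have := one_div_le_one_div_of_le hdist0 hdist.le
          linarith
        calc |p z - p x| * L ≤ (Clog / Real.log (Real.exp 1 + 1 / dist z x)) * L :=
              mul_le_mul_of_nonneg_right h (by linarith)
          _ ≤ (Clog / L) * L := by
              apply mul_le_mul_of_nonneg_right _ (by linarith)
              exact div_le_div_of_nonneg_left hClog.le hL0 hL'
          _ = Clog := div_mul_cancel₀ Clog hL0.ne'
    have habs : |p z - p x| ≤ Clog := by nlinarith [abs_nonneg (p z - p x)]
    have hlogv0 : Real.log v ≤ 0 := Real.log_nonpos hv0'.le hv1
    have hlogv : -Real.log v ≤ |Real.log c| + n * Real.log 2 + n * L := by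
      have hrne : r ≠ 0 := hr.ne'
      have hcne : c ≠ 0 := by
        intro h; rw [h, mul_zero] at hvv; exact hv0'.ne' hvv
      have hlv : Real.log v = n * Real.log r + Real.log c := by
        rw [hvv, Real.log_mul (pow_ne_zero _ hrne) hcne, Real.log_pow]
      have hlr : -Real.log r ≤ Real.log 2 + L := by
        have h1 : Real.log (1 / (2 * r)) ≤ L := by
          apply Real.log_le_log (by positivity)
          linarith [Real.exp_pos 1]
        have h2 : Real.log (1 / (2 * r)) = -(Real.log 2 + Real.log r) := by
          rw [one_div, Real.log_inv, Real.log_mul (by norm_num) hrne]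
        linarith
      have h3 : -Real.log c ≤ |Real.log c| := neg_le_abs _
      have h4 : (n:ℝ) * (-Real.log r) ≤ n * (Real.log 2 + L) :=
        mul_le_mul_of_nonneg_left hlr (Nat.cast_nonneg n)
      rw [hlv]; push_cast; nlinarith
    rw [abs_mul, abs_div, abs_of_pos hpz, abs_of_nonpos hlogv0]
    have key : |p z - p x| * (-Real.log v) ≤ Clog * (|Real.log c| + n * Real.log 2 + n) := by
      nlinarith [mul_le_mul_of_nonneg_left hlogv (abs_nonneg (p z - p x)),
        mul_le_mul_of_nonneg_right habs (abs_nonneg (Real.log c)),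
        mul_le_mul_of_nonneg_left hd (Nat.cast_nonneg n),
        mul_nonneg (mul_nonneg (abs_nonneg (p z - p x)) (Nat.cast_nonneg n)) (Real.log_nonneg one_le_two),
        mul_le_mul_of_nonneg_right habs (mul_nonneg (Nat.cast_nonneg n) (Real.log_nonneg one_le_two))]
    calc |p z - p x| / p z * (-Real.log v) = |p z - p x| * (-Real.log v) / p z := by ring
      _ ≤ Clog * (|Real.log c| + n * Real.log 2 + n) / pm := by
          apply div_le_div₀ (by positivity) key hpm (hr1 z)
      _ = K₂ := by rw [hK₂def]; ring
  have hbound := fun x hx => rpow_bounds hv0' (hest x hx)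
  -- upper bound l = A * v^(1/p z), modular ≤ 1
  have hlA : (0:ℝ) < A * v ^ (1 / p z) := by positivity
  have hmodA : ∫⁻ x in B, ENNReal.ofReal ((1 / (A * v ^ (1 / p z))) ^ p x) ≤ 1 := by
    have hptw : ∀ x ∈ B, (1 / (A * v ^ (1 / p z))) ^ p x ≤ v⁻¹ := by
      intro x hx
      rw [aux_rpow (p x) hApos hv0' hpz]
      have h1 : A ^ (-(p x)) ≤ A ^ (-pm) :=
        Real.rpow_le_rpow_of_exponent_le hA1 (neg_le_neg (hr1 x))
      have h2 : v ^ ((p z - p x) / p z) ≤ Real.exp K₂ := (hbound x hx).2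
      have h3 : A ^ (-pm : ℝ) = (A ^ (pm:ℝ))⁻¹ := Real.rpow_neg hApos.le pm
      have h4 : (A ^ (pm:ℝ))⁻¹ * Real.exp K₂ ≤ 1 := by
        rw [inv_mul_le_iff₀ (by positivity), mul_one]
        exact hApow
      have h5 : (0:ℝ) < A ^ (pm:ℝ) := Real.rpow_pos_of_pos hApos _
      calc A ^ (-(p x)) * (v⁻¹ * v ^ ((p z - p x) / p z))
          ≤ (A ^ (pm:ℝ))⁻¹ * (v⁻¹ * Real.exp K₂) := by
            apply mul_le_mul (h1.trans_eq h3)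
              (mul_le_mul_of_nonneg_left h2 (by positivity)) (by positivity) (by positivity)
        _ = v⁻¹ * ((A ^ (pm:ℝ))⁻¹ * Real.exp K₂) := by ring
        _ ≤ v⁻¹ * 1 := mul_le_mul_of_nonneg_left h4 (by positivity)
        _ = v⁻¹ := mul_one _
    calc ∫⁻ x in B, ENNReal.ofReal ((1 / (A * v ^ (1 / p z))) ^ p x)
        ≤ ENNReal.ofReal v⁻¹ * volume B := setmod_le p Metric.isOpen_ball.measurableSet hptw
      _ = ENNReal.ofReal v⁻¹ * ENNReal.ofReal v := by rw [hvol']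
      _ = 1 := by
          rw [← ENNReal.ofReal_mul (by positivity), inv_mul_cancel₀ hv0'.ne', ENNReal.ofReal_one]
  have hup : luxNorm p (B.indicator fun _ => 1) ≤ A * v ^ (1 / p z) :=
    luxNorm_le p hpos B Metric.isOpen_ball.measurableSet hlA hmodA
  -- lower bound l = a * v^(1/p z), modular > 1
  have hla : (0:ℝ) < a * v ^ (1 / p z) := by positivity
  have hmoda : (1:ℝ≥0∞) < ∫⁻ x in B, ENNReal.ofReal ((1 / (a * v ^ (1 / p z))) ^ p x) := by
    have hptw : ∀ x ∈ B, Real.exp 1 * v⁻¹ ≤ (1 / (a * v ^ (1 / p z))) ^ p x := by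
      intro x hx
      rw [aux_rpow (p x) ha hv0' hpz]
      have h1 : a ^ (-pm : ℝ) ≤ a ^ (-(p x)) :=
        Real.rpow_le_rpow_of_exponent_ge ha ha1 (neg_le_neg (hr1 x))
      have h2 : Real.exp (-K₂) ≤ v ^ ((p z - p x) / p z) := (hbound x hx).1
      calc Real.exp 1 * v⁻¹ = Real.exp (K₂ + 1) * (v⁻¹ * Real.exp (-K₂)) := by
            rw [mul_comm v⁻¹ (Real.exp (-K₂)), ← mul_assoc, ← Real.exp_add]
            ring_nf
        _ ≤ a ^ (-(p x)) * (v⁻¹ * v ^ ((p z - p x) / p z)) := by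
            apply mul_le_mul (hapow ▸ h1)
              (mul_le_mul_of_nonneg_left h2 (by positivity)) (by positivity)
            positivity
    calc (1:ℝ≥0∞) < ENNReal.ofReal (Real.exp 1) := by
          rw [ENNReal.one_lt_ofReal]; linarith [Real.add_one_le_exp 1]
      _ = ENNReal.ofReal (Real.exp 1 * v⁻¹) * ENNReal.ofReal v := by
          rw [← ENNReal.ofReal_mul (by positivity)]
          congr 1
          field_simp
      _ = ENNReal.ofReal (Real.exp 1 * v⁻¹) * volume B := by rw [hvol']
      _ ≤ _ := le_setmod p Metric.isOpen_ball.measurableSet hptw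
  have hlow : a * v ^ (1 / p z) ≤ luxNorm p (B.indicator fun _ => 1) :=
    le_luxNorm p hpos B Metric.isOpen_ball.measurableSet hlA hmodA hla hmoda
  constructor
  · refine le_trans ?_ hlow
    apply mul_le_mul_of_nonneg_right _ (Real.rpow_nonneg hv0'.le _)
    have h1 : a⁻¹ ≤ max A a⁻¹ := le_max_right _ _
    have h2 : (0:ℝ) < a⁻¹ := by positivity
    calc (max A a⁻¹)⁻¹ ≤ (a⁻¹)⁻¹ := inv_anti₀ h2 h1
      _ = a := inv_inv a
  · refine le_trans hup ?_
    apply mul_le_mul_of_nonneg_right (le_max_left _ _) (Real.rpow_nonneg hv0'.le _)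

set_option maxHeartbeats 2000000 in
private lemma large_ball_norm {n : ℕ} (hn : n ≠ 0) (p : EuclideanSpace ℝ (Fin n) → ℝ)
    (pm : ℝ) (hpm : 0 < pm) (hr1 : ∀ x, pm ≤ p x)
    (q Cq : ℝ) (hq : pm ≤ q) (hCq : 0 < Cq)
    (hqdecay : ∀ x, |p x - q| ≤ Cq / Real.log (Real.exp 1 + ‖x‖)) :
    ∃ K : ℝ, 1 ≤ K ∧ ∀ (x₀ : EuclideanSpace ℝ (Fin n)) (r : ℝ), 0 < r →
      1 ≤ (volume (Metric.ball x₀ r)).toReal →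
      K⁻¹ * (volume (Metric.ball x₀ r)).toReal ^ (1 / q) ≤
        luxNorm p ((Metric.ball x₀ r).indicator fun _ => 1) ∧
      luxNorm p ((Metric.ball x₀ r).indicator fun _ => 1) ≤
        K * (volume (Metric.ball x₀ r)).toReal ^ (1 / q) := by
  have hpos : ∀ x, 0 < p x := fun x => lt_of_lt_of_le hpm (hr1 x)
  have hq0 : 0 < q := lt_of_lt_of_le hpm hq
  have hn' : (0:ℝ) < (n:ℝ) := by exact_mod_cast Nat.pos_of_ne_zero hn
  set c : ℝ := (volume (Metric.ball (0 : EuclideanSpace ℝ (Fin n)) 1)).toReal with hcdef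
  have hc0 : 0 < c := by
    have := (ball_vol (0 : EuclideanSpace ℝ (Fin n)) one_pos).2
    simpa using this
  set γ : ℝ := pm / (2 * n * q) with hγdef
  have hγ0 : 0 < γ := by positivity
  have hγn : γ * n = pm / (2 * q) := by rw [hγdef]; field_simp
  set K₅ : ℝ := Real.exp (Cq / (q * γ)) with hK₅def
  have hK₅1 : 1 ≤ K₅ := Real.one_le_exp (by positivity)
  have hK₅0 : 0 < K₅ := lt_of_lt_of_le one_pos hK₅1
  set A : ℝ := max 1 (Real.exp (Real.log (c + K₅) / pm)) with hAdef
  have hA1 : (1:ℝ) ≤ A := le_max_left _ _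
  have hApos : (0:ℝ) < A := lt_of_lt_of_le one_pos hA1
  have hApow : c + K₅ ≤ A ^ (pm:ℝ) := by
    calc c + K₅ = Real.exp (Real.log (c + K₅)) := by rw [Real.exp_log (by positivity)]
      _ = (Real.exp (Real.log (c + K₅) / pm)) ^ (pm:ℝ) := by
          rw [exp_rpow_eq]; congr 1; field_simp
      _ ≤ A ^ (pm:ℝ) := Real.rpow_le_rpow (Real.exp_pos _).le (le_max_right _ _) hpm.le
  set V₀ : ℝ := max 1 (4 * c ^ 2) with hV₀def
  have hV₀1 : (1:ℝ) ≤ V₀ := le_max_left _ _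
  set a₁ : ℝ := (Real.exp 1)⁻¹ * V₀ ^ (-(1/q)) with ha₁def
  set a₂ : ℝ := Real.exp (-(Real.log (2 * K₅) + 1) / pm) with ha₂def
  have ha₁0 : 0 < a₁ := by
    have := Real.rpow_pos_of_pos (lt_of_lt_of_le one_pos hV₀1) (-(1/q))
    positivity
  set a : ℝ := min a₁ a₂ with hadef
  have ha : 0 < a := lt_min ha₁0 (Real.exp_pos _)
  have ha1 : a ≤ 1 := by
    have h1 : V₀ ^ (-(1/q)) ≤ 1 := Real.rpow_le_one_of_one_le_of_nonpos hV₀1 (neg_nonpos.2 (by positivity))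
    have h2 : (Real.exp 1)⁻¹ ≤ 1 := by
      rw [inv_le_one_iff₀]; right; linarith [Real.add_one_le_exp 1]
    calc a ≤ a₁ := min_le_left _ _
      _ ≤ 1 * 1 := by
          rw [ha₁def]
          apply mul_le_mul h2 h1 (Real.rpow_nonneg (by linarith) _) (by norm_num)
      _ = 1 := by norm_num
  have hapm : a ^ (pm:ℝ) ≤ (2 * K₅ * Real.exp 1)⁻¹ := by
    have h1 : a ^ (pm:ℝ) ≤ a₂ ^ (pm:ℝ) := Real.rpow_le_rpow ha.le (min_le_right _ _) hpm.le
    have h2 : a₂ ^ (pm:ℝ) = (2 * K₅ * Real.exp 1)⁻¹ := by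
      rw [ha₂def, exp_rpow_eq, div_mul_cancel₀ _ hpm.ne', ← Real.exp_log (show (0:ℝ) < 2 * K₅ * Real.exp 1 by positivity), ← Real.exp_neg]
      congr 1
      rw [Real.log_mul (by positivity) (Real.exp_pos 1).ne', Real.log_exp]
    rw [← h2]; exact h1
  refine ⟨max A a⁻¹, le_trans hA1 (le_max_left _ _), ?_⟩
  intro x₀ r hr hv1
  obtain ⟨hvol, hv0⟩ := ball_vol x₀ hr
  set B := Metric.ball x₀ r with hBdef
  set v : ℝ := (volume B).toReal with hvdef
  have hvv : v = r ^ n * c := by rw [hvdef, hvol, ENNReal.toReal_ofReal hv0.le]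
  have hv0' : 0 < v := hvv ▸ hv0
  have hvol' : volume B = ENNReal.ofReal v := by rw [hvol, ← hvv]
  have hlogv0 : 0 ≤ Real.log v := Real.log_nonneg hv1
  set R : ℝ := v ^ γ with hRdef
  have hR1 : 1 ≤ R := Real.one_le_rpow hv1 hγ0.le
  have hR0 : 0 < R := lt_of_lt_of_le one_pos hR1
  set Bc := Metric.ball (0 : EuclideanSpace ℝ (Fin n)) R with hBcdef
  obtain ⟨hvolc, _⟩ := ball_vol (0 : EuclideanSpace ℝ (Fin n)) hR0
  have hlogR : γ * Real.log v ≤ Real.log (Real.exp 1 + R) := by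
    have h1 : Real.exp (γ * Real.log v) = R := by
      rw [hRdef, Real.rpow_def_of_pos hv0', mul_comm]
    have h2 : Real.log (Real.exp (γ * Real.log v)) ≤ Real.log (Real.exp 1 + R) := by
      apply Real.log_le_log (Real.exp_pos _)
      rw [h1]; linarith [Real.exp_pos 1]
    rwa [Real.log_exp] at h2
  have he1 : (1:ℝ) < Real.exp 1 := by linarith [Real.add_one_le_exp 1]
  have hLR0 : 0 < Real.log (Real.exp 1 + R) := Real.log_pos (by linarith)
  -- decay estimate outside ball of radius R
  have hest : ∀ x : EuclideanSpace ℝ (Fin n), R ≤ ‖x‖ →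
      |((q - p x) / q) * Real.log v| ≤ Cq / (q * γ) := by
    intro x hx
    have hLx0 : 0 < Real.log (Real.exp 1 + ‖x‖) := Real.log_pos (by linarith)
    have hd : |q - p x| ≤ Cq / Real.log (Real.exp 1 + ‖x‖) := by
      rw [abs_sub_comm]; exact hqdecay x
    have hLR : Real.log (Real.exp 1 + R) ≤ Real.log (Real.exp 1 + ‖x‖) := by
      apply Real.log_le_log (by positivity)
      linarith
    have hd' : |q - p x| ≤ Cq / Real.log (Real.exp 1 + R) :=
      le_trans hd (div_le_div_of_nonneg_left hCq.le hLR0 hLR)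
    rw [abs_mul, abs_div, abs_of_pos hq0, abs_of_nonneg hlogv0]
    rw [div_mul_eq_mul_div, div_le_div_iff₀ hq0 (by positivity)]
    -- |q - p x| * log v * (q * γ) ≤ Cq * q
    have key : |q - p x| * Real.log v * γ ≤ Cq := by
      have h1 : |q - p x| * Real.log v * γ ≤ (Cq / Real.log (Real.exp 1 + R)) * Real.log v * γ := by
        apply mul_le_mul_of_nonneg_right (mul_le_mul_of_nonneg_right hd' hlogv0) hγ0.le
      have h2 : (Cq / Real.log (Real.exp 1 + R)) * Real.log v * γ ≤ Cq := by
        rw [div_mul_eq_mul_div, div_mul_eq_mul_div, div_le_iff₀ hLR0]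
        have h3 := mul_le_mul_of_nonneg_left hlogR hCq.le
        linarith
      linarith
    have h4 := mul_le_mul_of_nonneg_right key hq0.le
    linarith
  have hbound : ∀ x : EuclideanSpace ℝ (Fin n), R ≤ ‖x‖ →
      K₅⁻¹ ≤ v ^ ((q - p x) / q) ∧ v ^ ((q - p x) / q) ≤ K₅ := by
    intro x hx
    have h := rpow_bounds hv0' (hest x hx)
    rw [hK₅def, ← Real.exp_neg]
    exact h
  -- the two radii/volume computations
  have hRnc : (volume Bc) = ENNReal.ofReal (R ^ n * c) := hvolc
  have hRn : R ^ n = v ^ (γ * n) := by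
    rw [hRdef, ← Real.rpow_natCast (v ^ γ) n, ← Real.rpow_mul hv0'.le]
  -- upper bound
  have hvq1 : (1:ℝ) ≤ v ^ (1/q) := Real.one_le_rpow hv1 (by positivity)
  have hlA : (0:ℝ) < A * v ^ (1 / q) := by positivity
  have hlA1 : (1:ℝ) ≤ A * v ^ (1 / q) :=
    le_trans hvq1 (le_mul_of_one_le_left (by positivity) hA1)
  have hmodA : ∫⁻ x in B, ENNReal.ofReal ((1 / (A * v ^ (1 / q))) ^ p x) ≤ 1 := by
    have hBmeas : MeasurableSet B := Metric.isOpen_ball.measurableSet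
    have hBcmeas : MeasurableSet Bc := Metric.isOpen_ball.measurableSet
    have hsplit : ∫⁻ x in B, ENNReal.ofReal ((1 / (A * v ^ (1 / q))) ^ p x) =
        (∫⁻ x in B ∩ Bc, ENNReal.ofReal ((1 / (A * v ^ (1 / q))) ^ p x)) +
        ∫⁻ x in B \ Bc, ENNReal.ofReal ((1 / (A * v ^ (1 / q))) ^ p x) := by
      rw [← lintegral_union (hBmeas.diff hBcmeas)
        (disjoint_sdiff_self_right.mono_left inter_subset_right), Set.inter_union_diff]
    have hterm1 : ∫⁻ x in B ∩ Bc, ENNReal.ofReal ((1 / (A * v ^ (1 / q))) ^ p x) ≤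
        ENNReal.ofReal (A ^ (-pm) * c) := by
      have hptw : ∀ x ∈ B ∩ Bc, (1 / (A * v ^ (1 / q))) ^ p x ≤ A ^ (-pm) * (v⁻¹ * v ^ ((q - pm)/q)) := by
        intro x _
        have h1 : (1 / (A * v ^ (1 / q))) ^ p x ≤ (1 / (A * v ^ (1 / q))) ^ (pm:ℝ) := by
          apply Real.rpow_le_rpow_of_exponent_ge (by positivity) _ (hr1 x)
          rw [div_le_one hlA]; exact hlA1
        rw [aux_rpow pm hApos hv0' hq0] at h1
        exact h1
      calc ∫⁻ x in B ∩ Bc, ENNReal.ofReal ((1 / (A * v ^ (1 / q))) ^ p x)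
          ≤ ENNReal.ofReal (A ^ (-pm) * (v⁻¹ * v ^ ((q - pm)/q))) * volume (B ∩ Bc) :=
            setmod_le p (hBmeas.inter hBcmeas) hptw
        _ ≤ ENNReal.ofReal (A ^ (-pm) * (v⁻¹ * v ^ ((q - pm)/q))) * ENNReal.ofReal (R ^ n * c) := by
            apply mul_le_mul_right
            rw [← hRnc]
            exact measure_mono inter_subset_right
        _ = ENNReal.ofReal (A ^ (-pm) * (v⁻¹ * v ^ ((q - pm)/q)) * (R ^ n * c)) := by
            rw [← ENNReal.ofReal_mul]
            positivity
        _ ≤ ENNReal.ofReal (A ^ (-pm) * c) := by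
            apply ENNReal.ofReal_le_ofReal
            have hvid : v⁻¹ * v ^ ((q - pm)/q) * R ^ n = v ^ (γ * n - pm / q) := by
              rw [hRn, ← Real.rpow_neg_one v, ← Real.rpow_add hv0', ← Real.rpow_add hv0']
              congr 1
              field_simp
              ring
            have hexp_le : v ^ (γ * n - pm / q) ≤ 1 := by
              apply Real.rpow_le_one_of_one_le_of_nonpos hv1
              rw [hγn]
              have : pm / (2*q) ≤ pm / q := by
                apply div_le_div_of_nonneg_left hpm.le hq0
                linarith
              linarith
            calc A ^ (-pm) * (v⁻¹ * v ^ ((q - pm)/q)) * (R ^ n * c)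
                = A ^ (-pm) * c * (v⁻¹ * v ^ ((q - pm)/q) * R ^ n) := by ring
              _ = A ^ (-pm) * c * v ^ (γ * n - pm / q) := by rw [hvid]
              _ ≤ A ^ (-pm) * c * 1 := by
                  apply mul_le_mul_of_nonneg_left hexp_le
                  positivity
              _ = A ^ (-pm) * c := mul_one _
    have hterm2 : ∫⁻ x in B \ Bc, ENNReal.ofReal ((1 / (A * v ^ (1 / q))) ^ p x) ≤
        ENNReal.ofReal (A ^ (-pm) * K₅) := by
      have hptw : ∀ x ∈ B \ Bc, (1 / (A * v ^ (1 / q))) ^ p x ≤ A ^ (-pm) * (v⁻¹ * K₅) := by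
        intro x hx
        have hxR : R ≤ ‖x‖ := by
          have := hx.2
          rw [hBcdef, Metric.mem_ball, dist_zero_right] at this
          linarith [not_lt.1 this]
        rw [aux_rpow (p x) hApos hv0' hq0]
        have h1 : A ^ (-(p x)) ≤ A ^ (-pm) :=
          Real.rpow_le_rpow_of_exponent_le hA1 (neg_le_neg (hr1 x))
        have h2 : v ^ ((q - p x) / q) ≤ K₅ := (hbound x hxR).2
        apply mul_le_mul h1 (mul_le_mul_of_nonneg_left h2 (by positivity)) (by positivity)
          (by positivity)
      calc ∫⁻ x in B \ Bc, ENNReal.ofReal ((1 / (A * v ^ (1 / q))) ^ p x)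
          ≤ ENNReal.ofReal (A ^ (-pm) * (v⁻¹ * K₅)) * volume (B \ Bc) :=
            setmod_le p (hBmeas.diff hBcmeas) hptw
        _ ≤ ENNReal.ofReal (A ^ (-pm) * (v⁻¹ * K₅)) * ENNReal.ofReal v := by
            apply mul_le_mul_right
            rw [← hvol']
            exact measure_mono diff_subset
        _ = ENNReal.ofReal (A ^ (-pm) * (v⁻¹ * K₅) * v) := by
            rw [← ENNReal.ofReal_mul]
            positivity
        _ = ENNReal.ofReal (A ^ (-pm) * K₅) := by
            congr 1
            field_simp
    calc ∫⁻ x in B, ENNReal.ofReal ((1 / (A * v ^ (1 / q))) ^ p x)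
        ≤ ENNReal.ofReal (A ^ (-pm) * c) + ENNReal.ofReal (A ^ (-pm) * K₅) := by
          rw [hsplit]; exact add_le_add hterm1 hterm2
      _ = ENNReal.ofReal (A ^ (-pm) * (c + K₅)) := by
          rw [← ENNReal.ofReal_add (by positivity) (by positivity)]
          congr 1
          ring
      _ ≤ 1 := by
          rw [← ENNReal.ofReal_one]
          apply ENNReal.ofReal_le_ofReal
          rw [Real.rpow_neg hApos.le]
          rw [inv_mul_le_iff₀ (Real.rpow_pos_of_pos hApos _), mul_one]
          exact hApow
  have hup : luxNorm p (B.indicator fun _ => 1) ≤ A * v ^ (1 / q) :=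
    luxNorm_le p hpos B Metric.isOpen_ball.measurableSet hlA hmodA
  -- lower bound
  have hla : (0:ℝ) < a * v ^ (1 / q) := by positivity
  have hmoda : (1:ℝ≥0∞) < ∫⁻ x in B, ENNReal.ofReal ((1 / (a * v ^ (1 / q))) ^ p x) := by
    have hBmeas : MeasurableSet B := Metric.isOpen_ball.measurableSet
    have hBcmeas : MeasurableSet Bc := Metric.isOpen_ball.measurableSet
    by_cases hvV : v ≤ V₀
    · -- small volume case : l ≤ e⁻¹
      have hle : a * v ^ (1/q) ≤ (Real.exp 1)⁻¹ := by
        have h1 : v ^ (1/q) ≤ V₀ ^ (1/q) := Real.rpow_le_rpow hv0'.le hvV (by positivity)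
        have h2 : a₁ * V₀ ^ (1/q) = (Real.exp 1)⁻¹ := by
          rw [ha₁def, mul_assoc, ← Real.rpow_add (lt_of_lt_of_le one_pos hV₀1)]
          norm_num
        calc a * v ^ (1/q) ≤ a₁ * V₀ ^ (1/q) := by
              apply mul_le_mul (min_le_left _ _) h1 (by positivity) ha₁0.le
          _ = (Real.exp 1)⁻¹ := h2
      have hptw : ∀ x ∈ B, Real.exp pm ≤ (1 / (a * v ^ (1/q))) ^ p x := by
        intro x _
        have hinv : Real.exp 1 ≤ 1 / (a * v ^ (1/q)) := by
          rw [le_div_iff₀ hla]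
          calc Real.exp 1 * (a * v ^ (1/q)) ≤ Real.exp 1 * (Real.exp 1)⁻¹ := by
                apply mul_le_mul_of_nonneg_left hle (Real.exp_pos 1).le
            _ = 1 := mul_inv_cancel₀ (Real.exp_pos 1).ne'
        calc Real.exp pm = (Real.exp 1) ^ (pm:ℝ) := by rw [exp_rpow_eq, one_mul]
          _ ≤ (1 / (a * v ^ (1/q))) ^ (pm:ℝ) :=
              Real.rpow_le_rpow (Real.exp_pos 1).le hinv hpm.le
          _ ≤ (1 / (a * v ^ (1/q))) ^ p x := by
              apply Real.rpow_le_rpow_of_exponent_le _ (hr1 x)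
              exact le_trans he1.le hinv
      calc (1:ℝ≥0∞) < ENNReal.ofReal (Real.exp pm) := by
            rw [ENNReal.one_lt_ofReal]
            exact Real.one_lt_exp_iff.2 hpm
        _ = ENNReal.ofReal (Real.exp pm) * 1 := (mul_one _).symm
        _ ≤ ENNReal.ofReal (Real.exp pm) * volume B := by
            apply mul_le_mul_right
            rw [hvol', ← ENNReal.ofReal_one]
            exact ENNReal.ofReal_le_ofReal hv1
        _ ≤ _ := le_setmod p hBmeas hptw
    · -- large volume case
      push_neg at hvV
      have h4c : 4 * c ^ 2 ≤ v := le_trans (le_max_right _ _) hvV.le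
      have hsq : 2 * c ≤ Real.sqrt v := by
        have h1 : Real.sqrt (4 * c ^ 2) ≤ Real.sqrt v := Real.sqrt_le_sqrt h4c
        rwa [show 4 * c ^ 2 = (2*c)^2 by ring, Real.sqrt_sq (by positivity)] at h1
      have hRnc2 : R ^ n * c ≤ v / 2 := by
        have h1 : R ^ n ≤ Real.sqrt v := by
          rw [hRn, hγn, Real.sqrt_eq_rpow]
          apply Real.rpow_le_rpow_of_exponent_le hv1
          rw [div_le_div_iff₀ (by positivity) (by norm_num)]
          linarith
        have h2 : Real.sqrt v * Real.sqrt v = v := Real.mul_self_sqrt hv0'.le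
        have h3 := mul_le_mul_of_nonneg_right h1 hc0.le
        have h4 := mul_le_mul_of_nonneg_right hsq (Real.sqrt_nonneg v)
        linarith
      have hμdiff : ENNReal.ofReal (v/2) ≤ volume (B \ Bc) := by
        have h1 : volume B ≤ volume (B \ Bc) + volume Bc :=
          le_trans (measure_mono (subset_diff_union B Bc)) (measure_union_le _ _)
        have h2 : volume B = ENNReal.ofReal (v/2) + ENNReal.ofReal (v/2) := by
          rw [hvol', ← ENNReal.ofReal_add (by positivity) (by positivity)]
          congr 1; ring
        have h3 : volume Bc ≤ ENNReal.ofReal (v/2) := by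
          rw [hRnc]; exact ENNReal.ofReal_le_ofReal hRnc2
        have h4 : ENNReal.ofReal (v/2) + ENNReal.ofReal (v/2) ≤
            volume (B \ Bc) + ENNReal.ofReal (v/2) := by
          rw [← h2]
          exact le_trans h1 (add_le_add_right h3 _)
        exact (ENNReal.add_le_add_iff_right ENNReal.ofReal_ne_top).1 h4
      have hptw : ∀ x ∈ B \ Bc, a ^ (-pm) * (v⁻¹ * K₅⁻¹) ≤ (1 / (a * v ^ (1/q))) ^ p x := by
        intro x hx
        have hxR : R ≤ ‖x‖ := by
          have := hx.2
          rw [hBcdef, Metric.mem_ball, dist_zero_right] at this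
          linarith [not_lt.1 this]
        rw [aux_rpow (p x) ha hv0' hq0]
        have h1 : a ^ (-pm : ℝ) ≤ a ^ (-(p x)) :=
          Real.rpow_le_rpow_of_exponent_ge ha ha1 (neg_le_neg (hr1 x))
        have h2 : K₅⁻¹ ≤ v ^ ((q - p x) / q) := (hbound x hxR).1
        apply mul_le_mul h1 (mul_le_mul_of_nonneg_left h2 (by positivity)) (by positivity)
          (Real.rpow_nonneg ha.le _)
      have hstrict : (1:ℝ≥0∞) < ENNReal.ofReal (a ^ (-pm) * (v⁻¹ * K₅⁻¹)) * ENNReal.ofReal (v/2) := by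
        rw [← ENNReal.ofReal_mul (by positivity), ENNReal.one_lt_ofReal]
        have heq : a ^ (-pm) * (v⁻¹ * K₅⁻¹) * (v/2) = a ^ (-pm) / (2 * K₅ * Real.exp 1) * Real.exp 1 := by
          field_simp
        have hainv : 2 * K₅ * Real.exp 1 ≤ a ^ (-pm : ℝ) := by
          rw [Real.rpow_neg ha.le, le_inv_comm₀ (by positivity) (Real.rpow_pos_of_pos ha _)]
          exact hapm
        rw [heq]
        have h5 : (1:ℝ) ≤ a ^ (-pm) / (2 * K₅ * Real.exp 1) := by
          rw [le_div_iff₀ (by positivity), one_mul]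
          exact hainv
        have h6 := mul_le_mul_of_nonneg_right h5 (Real.exp_pos 1).le
        linarith
      calc (1:ℝ≥0∞) < ENNReal.ofReal (a ^ (-pm) * (v⁻¹ * K₅⁻¹)) * ENNReal.ofReal (v/2) := hstrict
        _ ≤ ENNReal.ofReal (a ^ (-pm) * (v⁻¹ * K₅⁻¹)) * volume (B \ Bc) :=
            mul_le_mul_right hμdiff _
        _ ≤ ∫⁻ x in B \ Bc, ENNReal.ofReal ((1 / (a * v ^ (1/q))) ^ p x) :=
            le_setmod p (hBmeas.diff hBcmeas) hptw
        _ ≤ ∫⁻ x in B, ENNReal.ofReal ((1 / (a * v ^ (1/q))) ^ p x) :=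
            lintegral_mono_set diff_subset
  have hlow : a * v ^ (1 / q) ≤ luxNorm p (B.indicator fun _ => 1) :=
    le_luxNorm p hpos B Metric.isOpen_ball.measurableSet hlA hmodA hla hmoda
  constructor
  · refine le_trans ?_ hlow
    apply mul_le_mul_of_nonneg_right _ (Real.rpow_nonneg hv0'.le _)
    have h1 : a⁻¹ ≤ max A a⁻¹ := le_max_right _ _
    calc (max A a⁻¹)⁻¹ ≤ (a⁻¹)⁻¹ := inv_anti₀ (by positivity) h1
      _ = a := inv_inv a
  · exact le_trans hup (mul_le_mul_of_nonneg_right (le_max_left _ _) (Real.rpow_nonneg hv0'.le _))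

private lemma ratio_same {N₁ N₂ v₁ v₂ K e f g C : ℝ} (hK : 1 ≤ K) (hKC : K^2 ≤ C)
    (hv₁ : 0 < v₁) (hv₂ : 0 < v₂) (hv₁₂ : v₁ ≤ v₂)
    (hfe : f ≤ e) (heg : e ≤ g)
    (h1 : N₁ ≤ K * v₁ ^ e) (h1' : K⁻¹ * v₁ ^ e ≤ N₁)
    (h2 : N₂ ≤ K * v₂ ^ e) (h2' : K⁻¹ * v₂ ^ e ≤ N₂) :
    C⁻¹ * (v₁/v₂) ^ g ≤ N₁/N₂ ∧ N₁/N₂ ≤ C * (v₁/v₂) ^ f := by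
  have hK0 : (0:ℝ) < K := lt_of_lt_of_le one_pos hK
  have hC0 : (0:ℝ) < C := lt_of_lt_of_le (by nlinarith) hKC
  have hN₁ : 0 < N₁ := lt_of_lt_of_le (by positivity) h1'
  have hN₂ : 0 < N₂ := lt_of_lt_of_le (by positivity) h2'
  have ht : 0 < v₁/v₂ := div_pos hv₁ hv₂
  have ht1 : v₁/v₂ ≤ 1 := (div_le_one hv₂).2 hv₁₂
  have hdiv : (v₁/v₂) ^ e = v₁ ^ e / v₂ ^ e := Real.div_rpow hv₁.le hv₂.le e
  constructor
  · have hexp : (v₁/v₂) ^ g ≤ (v₁/v₂) ^ e := Real.rpow_le_rpow_of_exponent_ge ht ht1 heg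
    have hinv : C⁻¹ ≤ (K^2)⁻¹ := by
      apply inv_anti₀ (by positivity) hKC
    calc C⁻¹ * (v₁/v₂) ^ g ≤ (K^2)⁻¹ * (v₁/v₂) ^ e := by
          apply mul_le_mul hinv hexp (by positivity) (by positivity)
      _ = (K⁻¹ * v₁ ^ e) / (K * v₂ ^ e) := by
          rw [hdiv, mul_div_mul_comm]
          congr 1
          rw [div_eq_mul_inv, ← mul_inv, ← sq]
      _ ≤ N₁/N₂ := div_le_div₀ hN₁.le h1' hN₂ h2
  · have hexp : (v₁/v₂) ^ e ≤ (v₁/v₂) ^ f := Real.rpow_le_rpow_of_exponent_ge ht ht1 hfe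
    calc N₁/N₂ ≤ (K * v₁ ^ e) / (K⁻¹ * v₂ ^ e) := by
          apply div_le_div₀ (by positivity) h1 (by positivity) h2'
      _ = K^2 * (v₁/v₂) ^ e := by
          rw [hdiv, mul_div_mul_comm, div_inv_eq_mul, ← sq]
      _ ≤ C * (v₁/v₂) ^ f := by
          apply mul_le_mul hKC hexp (by positivity) hC0.le

private lemma ratio_mixed {N₁ N₂ v₁ v₂ K₁ K₂ e₁ e₂ f g C : ℝ}
    (hK₁ : 1 ≤ K₁) (hK₂ : 1 ≤ K₂) (hC : K₁ * K₂ ≤ C)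
    (hv₁ : 0 < v₁) (hv₁1 : v₁ ≤ 1) (hv₂ : 1 ≤ v₂)
    (hf1 : f ≤ e₁) (hf2 : f ≤ e₂) (hg1 : e₁ ≤ g) (hg2 : e₂ ≤ g)
    (h1 : N₁ ≤ K₁ * v₁ ^ e₁) (h1' : K₁⁻¹ * v₁ ^ e₁ ≤ N₁)
    (h2 : N₂ ≤ K₂ * v₂ ^ e₂) (h2' : K₂⁻¹ * v₂ ^ e₂ ≤ N₂) :
    C⁻¹ * (v₁/v₂) ^ g ≤ N₁/N₂ ∧ N₁/N₂ ≤ C * (v₁/v₂) ^ f := by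
  have hK₁0 : (0:ℝ) < K₁ := lt_of_lt_of_le one_pos hK₁
  have hK₂0 : (0:ℝ) < K₂ := lt_of_lt_of_le one_pos hK₂
  have hC0 : (0:ℝ) < C := lt_of_lt_of_le (by nlinarith) hC
  have hv₂0 : (0:ℝ) < v₂ := lt_of_lt_of_le one_pos hv₂
  have hN₁ : 0 < N₁ := lt_of_lt_of_le (by positivity) h1'
  have hN₂ : 0 < N₂ := lt_of_lt_of_le (by positivity) h2'
  constructor
  · have hx1 : v₁ ^ g ≤ v₁ ^ e₁ := Real.rpow_le_rpow_of_exponent_ge hv₁ hv₁1 hg1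
    have hx2 : v₂ ^ e₂ ≤ v₂ ^ g := Real.rpow_le_rpow_of_exponent_le hv₂ hg2
    have hdd : v₁ ^ g / v₂ ^ g ≤ v₁ ^ e₁ / v₂ ^ e₂ :=
      div_le_div₀ (by positivity) hx1 (by positivity) hx2
    have hCinv : C⁻¹ ≤ (K₁ * K₂)⁻¹ := inv_anti₀ (by positivity) hC
    calc C⁻¹ * (v₁/v₂) ^ g ≤ (K₁*K₂)⁻¹ * (v₁ ^ e₁ / v₂ ^ e₂) := by
          rw [Real.div_rpow hv₁.le hv₂0.le]
          apply mul_le_mul hCinv hdd (by positivity) (by positivity)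
      _ = (K₁⁻¹ * v₁ ^ e₁) / (K₂ * v₂ ^ e₂) := by
          rw [mul_div_mul_comm]
          congr 1
          rw [div_eq_mul_inv, ← mul_inv]
      _ ≤ N₁/N₂ := div_le_div₀ hN₁.le h1' hN₂ h2
  · have hx1 : v₁ ^ e₁ ≤ v₁ ^ f := Real.rpow_le_rpow_of_exponent_ge hv₁ hv₁1 hf1
    have hx2 : v₂ ^ f ≤ v₂ ^ e₂ := Real.rpow_le_rpow_of_exponent_le hv₂ hf2
    have hdd : v₁ ^ e₁ / v₂ ^ e₂ ≤ v₁ ^ f / v₂ ^ f :=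
      div_le_div₀ (by positivity) hx1 (by positivity) hx2
    calc N₁/N₂ ≤ (K₁ * v₁ ^ e₁) / (K₂⁻¹ * v₂ ^ e₂) :=
          div_le_div₀ (by positivity) h1 (by positivity) h2'
      _ = (K₁*K₂) * (v₁ ^ e₁ / v₂ ^ e₂) := by
          rw [mul_div_mul_comm, div_inv_eq_mul]
      _ ≤ C * (v₁/v₂) ^ f := by
          rw [Real.div_rpow hv₁.le hv₂0.le]
          apply mul_le_mul hC hdd (by positivity) hC0.le


set_option maxHeartbeats 4000000

/-- For globally log-Hölder continuous `p(·)`, the norms of characteristic functions of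
nested balls compare as `C⁻¹ (|B₁|/|B₂|)^{1/p₋} ≤ ‖χ_{B₁}‖/‖χ_{B₂}‖ ≤ C (|B₁|/|B₂|)^{1/p₊}`. -/
theorem stmt10 {n : ℕ} (p : EuclideanSpace ℝ (Fin n) → ℝ) (hp : Measurable p)
    (hpos : ∀ x, 0 < p x)
    (hlow : 0 < essInf p (volume : Measure (EuclideanSpace ℝ (Fin n))))
    (hbd : ∃ M : ℝ, ∀ᵐ x ∂(volume : Measure (EuclideanSpace ℝ (Fin n))), p x ≤ M)
    (Clog Cinf pinf : ℝ) (hClog : 0 < Clog) (hCinf : 0 < Cinf)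
    (hlogHolder : ∀ x y, x ≠ y →
      |p x - p y| ≤ Clog / Real.log (Real.exp 1 + 1 / dist x y))
    (hdecay : ∀ x, |p x - pinf| ≤ Cinf / Real.log (Real.exp 1 + ‖x‖)) :
    ∃ C ≥ (1 : ℝ), ∀ (x₁ x₂ : EuclideanSpace ℝ (Fin n)) (r₁ r₂ : ℝ), 0 < r₁ → 0 < r₂ →
      Metric.ball x₁ r₁ ⊆ Metric.ball x₂ r₂ →
      C⁻¹ * ((volume (Metric.ball x₁ r₁)).toReal / (volume (Metric.ball x₂ r₂)).toReal) ^
          (1 / essInf p (volume : Measure (EuclideanSpace ℝ (Fin n)))) ≤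
        luxNorm p ((Metric.ball x₁ r₁).indicator fun _ => (1 : ℝ)) /
          luxNorm p ((Metric.ball x₂ r₂).indicator fun _ => (1 : ℝ)) ∧
      luxNorm p ((Metric.ball x₁ r₁).indicator fun _ => (1 : ℝ)) /
          luxNorm p ((Metric.ball x₂ r₂).indicator fun _ => (1 : ℝ)) ≤
        C * ((volume (Metric.ball x₁ r₁)).toReal / (volume (Metric.ball x₂ r₂)).toReal) ^
          (1 / essSup p (volume : Measure (EuclideanSpace ℝ (Fin n)))) := by
  by_cases hn : n = 0
  · -- dimension 0 : all balls are the whole (one-point) space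
    subst hn
    refine ⟨1, le_refl 1, ?_⟩
    have huniq : ∀ x y : EuclideanSpace ℝ (Fin 0), x = y := fun x y =>
      by ext i; exact Fin.elim0 i
    have hball : ∀ (x₀ : EuclideanSpace ℝ (Fin 0)) (r : ℝ), 0 < r →
        Metric.ball x₀ r = univ := by
      intro x₀ r hr
      apply eq_univ_of_forall
      intro y
      rw [Metric.mem_ball, huniq y x₀, dist_self]
      exact hr
    have hvoluniv : volume (univ : Set (EuclideanSpace ℝ (Fin 0))) = 1 := by
      have h := (EuclideanSpace.volume_preserving_symm_measurableEquiv_toLp (Fin 0)).measure_preimage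
        (MeasurableSet.univ.nullMeasurableSet)
      simp only [Set.preimage_univ] at h
      rw [volume_euclideanSpace_eq_dirac]
      simp
    have hmod : ∀ l : ℝ,
        (∫⁻ x, ENNReal.ofReal
          ((|((univ : Set (EuclideanSpace ℝ (Fin 0))).indicator (fun _ => (1:ℝ))) x| / l) ^ p x))
          = ENNReal.ofReal ((1/l) ^ p 0) := by
      intro l
      rw [modular_rw p hpos univ MeasurableSet.univ l, Measure.restrict_univ]
      have heq : (fun x : EuclideanSpace ℝ (Fin 0) => ENNReal.ofReal ((1/l) ^ p x)) =
          fun _ => ENNReal.ofReal ((1/l) ^ p 0) := funext fun x => by rw [huniq x 0]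
      rw [heq, lintegral_const, hvoluniv, mul_one]
    have hN : luxNorm p ((univ : Set (EuclideanSpace ℝ (Fin 0))).indicator fun _ => (1:ℝ)) = 1 := by
      have h1mem : (1:ℝ) ∈ {l : ℝ | 0 < l ∧ ∫⁻ x, ENNReal.ofReal
          ((|((univ : Set (EuclideanSpace ℝ (Fin 0))).indicator (fun _ => (1:ℝ))) x| / l) ^ p x) ≤ 1} := by
        refine ⟨one_pos, ?_⟩
        rw [hmod 1]
        norm_num
      apply le_antisymm
      · exact csInf_le ⟨0, fun m hm => hm.1.le⟩ h1mem
      · apply le_csInf ⟨1, h1mem⟩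
        rintro m ⟨hm0, hmmod⟩
        by_contra hcon
        push_neg at hcon
        rw [hmod m] at hmmod
        have hgt : (1:ℝ) < (1/m) ^ p 0 := by
          apply (Real.one_lt_rpow_iff_of_pos (by positivity)).2
          left
          constructor
          · rw [lt_div_iff₀ hm0]; linarith
          · exact hpos 0
        have : (1:ℝ≥0∞) < ENNReal.ofReal ((1/m) ^ p 0) := ENNReal.one_lt_ofReal.2 hgt
        exact absurd hmmod (not_le.2 this)
    intro x₁ x₂ r₁ r₂ hr₁ hr₂ _
    rw [hball x₁ r₁ hr₁, hball x₂ r₂ hr₂, hN, hvoluniv]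
    norm_num
  · -- positive dimension
    -- boundedness data for essential bounds
    have hvolne : (volume : Measure (EuclideanSpace ℝ (Fin n))) ≠ 0 := by
      intro h
      have := isOpen_univ.measure_pos (volume : Measure (EuclideanSpace ℝ (Fin n))) univ_nonempty
      rw [h] at this
      simp at this
    have : (ae (volume : Measure (EuclideanSpace ℝ (Fin n)))).NeBot :=
      ae_neBot.2 hvolne
    obtain ⟨M, hM⟩ := hbd
    have hbdd_above : Filter.IsBoundedUnder (· ≤ ·)
        (ae (volume : Measure (EuclideanSpace ℝ (Fin n)))) p :=
      ⟨M, by simpa [Filter.eventually_map] using hM⟩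
    have hbdd_below : Filter.IsBoundedUnder (· ≥ ·)
        (ae (volume : Measure (EuclideanSpace ℝ (Fin n)))) p :=
      ⟨0, by simpa [Filter.eventually_map] using ae_of_all _ fun x => (hpos x).le⟩
    set pm : ℝ := essInf p (volume : Measure (EuclideanSpace ℝ (Fin n))) with hpmdef
    set pM : ℝ := essSup p (volume : Measure (EuclideanSpace ℝ (Fin n))) with hpMdef
    have hae1 : ∀ᵐ x ∂(volume : Measure (EuclideanSpace ℝ (Fin n))), pm ≤ p x :=
      _root_.ae_essInf_le hbdd_below
    have hae2 : ∀ᵐ x ∂(volume : Measure (EuclideanSpace ℝ (Fin n))), p x ≤ pM :=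
      _root_.ae_le_essSup hbdd_above
    -- continuity of p from log-Hölder continuity
    have hcont : Continuous p := by
      rw [Metric.continuous_iff]
      intro b ε hε
      refine ⟨Real.exp (-(Clog/ε + 1)), Real.exp_pos _, fun a hab => ?_⟩
      by_cases hab' : a = b
      · rw [hab', dist_self]
        exact hε
      · have h := hlogHolder a b hab'
        have hd0 : 0 < dist a b := dist_pos.2 hab'
        have hlog : Clog/ε + 1 ≤ Real.log (Real.exp 1 + 1/dist a b) := by
          have h2 : Real.log (dist a b) < -(Clog/ε+1) := by
            have h' := Real.log_lt_log hd0 hab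
            rwa [Real.log_exp] at h'
          have h3 : Real.log (1/dist a b) = -Real.log (dist a b) := by
            rw [one_div, Real.log_inv]
          have h4 : Real.log (1/dist a b) ≤ Real.log (Real.exp 1 + 1/dist a b) :=
            Real.log_le_log (by positivity) (by linarith [Real.exp_pos 1])
          linarith
        have hL0 : 0 < Real.log (Real.exp 1 + 1/dist a b) := by
          have : (0:ℝ) < Clog/ε := by positivity
          linarith
        rw [Real.dist_eq]
        calc |p a - p b| ≤ Clog / Real.log (Real.exp 1 + 1/dist a b) := h
          _ < ε := by
              rw [div_lt_iff₀ hL0]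
              have h5 := mul_le_mul_of_nonneg_left hlog hε.le
              have h6 : ε * (Clog/ε + 1) = Clog + ε := by field_simp
              linarith
    -- pointwise bounds from essential bounds and continuity
    have hple : ∀ x, p x ≤ pM := by
      intro x
      by_contra hx
      push_neg at hx
      have hU : IsOpen (p ⁻¹' (Ioi pM)) := isOpen_Ioi.preimage hcont
      have hUpos : 0 < volume (p ⁻¹' (Ioi pM)) := hU.measure_pos volume ⟨x, hx⟩
      have h0 : volume (p ⁻¹' (Ioi pM)) = 0 := by
        rw [ae_iff] at hae2
        simp only [not_le] at hae2
        exact hae2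
      rw [h0] at hUpos
      exact lt_irrefl _ hUpos
    have hpge : ∀ x, pm ≤ p x := by
      intro x
      by_contra hx
      push_neg at hx
      have hU : IsOpen (p ⁻¹' (Iio pm)) := isOpen_Iio.preimage hcont
      have hUpos : 0 < volume (p ⁻¹' (Iio pm)) := hU.measure_pos volume ⟨x, hx⟩
      have h0 : volume (p ⁻¹' (Iio pm)) = 0 := by
        rw [ae_iff] at hae1
        simp only [not_le] at hae1
        exact hae1
      rw [h0] at hUpos
      exact lt_irrefl _ hUpos
    have hpmM : pm ≤ pM := le_trans (hpge 0) (hple 0)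
    have hpM0 : 0 < pM := lt_of_lt_of_le hlow hpmM
    -- clamp pinf into [pm, pM]
    set q : ℝ := max pm (min pinf pM) with hqdef
    have hq1 : pm ≤ q := le_max_left _ _
    have hq2 : q ≤ pM := max_le hpmM (min_le_right _ _)
    have hq0 : 0 < q := lt_of_lt_of_le hlow hq1
    have hqdecay : ∀ x, |p x - q| ≤ Cinf / Real.log (Real.exp 1 + ‖x‖) := by
      intro x
      refine le_trans ?_ (hdecay x)
      rcases le_total pinf pm with h|h
      · have hqe : q = pm := by
          rw [hqdef, min_eq_left (le_trans h hpmM), max_eq_left h]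
        rw [hqe, abs_of_nonneg (by linarith [hpge x]), abs_of_nonneg (by linarith [hpge x])]
        linarith
      · rcases le_total pinf pM with h'|h'
        · have hqe : q = pinf := by rw [hqdef, min_eq_left h', max_eq_right h]
          rw [hqe]
        · have hqe : q = pM := by rw [hqdef, min_eq_right h', max_eq_right hpmM]
          rw [hqe, abs_of_nonpos (by linarith [hple x]), abs_of_nonpos (by linarith [hple x])]
          linarith
    -- the two sandwich estimates
    obtain ⟨KS, hKS1, hS⟩ := small_ball_norm p pm hlow hpge Clog hClog hlogHolder
    obtain ⟨KL, hKL1, hL⟩ := large_ball_norm hn p pm hlow hpge q Cinf hq1 hCinf hqdecay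
    set KK : ℝ := max KS KL with hKKdef
    have hKK1 : (1:ℝ) ≤ KK := le_trans hKS1 (le_max_left _ _)
    refine ⟨KK^2, by nlinarith, ?_⟩
    intro x₁ x₂ r₁ r₂ hr₁ hr₂ hsub
    obtain ⟨hvol₁, hv₁p⟩ := ball_vol x₁ hr₁
    obtain ⟨hvol₂, hv₂p⟩ := ball_vol x₂ hr₂
    set v₁ : ℝ := (volume (Metric.ball x₁ r₁)).toReal with hv₁def
    set v₂ : ℝ := (volume (Metric.ball x₂ r₂)).toReal with hv₂def
    have hv₁0 : 0 < v₁ := by rw [hv₁def, hvol₁, ENNReal.toReal_ofReal hv₁p.le]; exact hv₁p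
    have hv₂0 : 0 < v₂ := by rw [hv₂def, hvol₂, ENNReal.toReal_ofReal hv₂p.le]; exact hv₂p
    have hv₁₂ : v₁ ≤ v₂ := by
      apply ENNReal.toReal_mono
      · rw [hvol₂]; exact ENNReal.ofReal_ne_top
      · exact measure_mono hsub
    have hz : x₁ ∈ Metric.ball x₂ r₂ := hsub (Metric.mem_ball_self hr₁)
    have hpx₁ : 0 < p x₁ := lt_of_lt_of_le hlow (hpge x₁)
    have hf1 : 1/pM ≤ 1/(p x₁) := one_div_le_one_div_of_le hpx₁ (hple x₁)
    have hg1 : 1/(p x₁) ≤ 1/pm := one_div_le_one_div_of_le hlow (hpge x₁)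
    have hfq : 1/pM ≤ 1/q := one_div_le_one_div_of_le hq0 hq2
    have hgq : 1/q ≤ 1/pm := one_div_le_one_div_of_le hlow hq1
    by_cases h2 : v₂ ≤ 1
    · have h1 : v₁ ≤ 1 := le_trans hv₁₂ h2
      obtain ⟨hS1l, hS1u⟩ := hS x₁ x₁ r₁ hr₁ (Metric.mem_ball_self hr₁) h1
      obtain ⟨hS2l, hS2u⟩ := hS x₂ x₁ r₂ hr₂ hz h2
      have hKC : KS^2 ≤ KK^2 := by
        have := le_max_left KS KL
        nlinarith
      exact ratio_same hKS1 hKC hv₁0 hv₂0 hv₁₂ hf1 hg1 hS1u hS1l hS2u hS2l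
    · push_neg at h2
      by_cases h1 : v₁ ≤ 1
      · obtain ⟨hS1l, hS1u⟩ := hS x₁ x₁ r₁ hr₁ (Metric.mem_ball_self hr₁) h1
        obtain ⟨hL2l, hL2u⟩ := hL x₂ r₂ hr₂ h2.le
        have hKC : KS * KL ≤ KK^2 := by
          have hma := le_max_left KS KL
          have hmb := le_max_right KS KL
          nlinarith
        exact ratio_mixed hKS1 hKL1 hKC hv₁0 h1 h2.le hf1 hfq hg1 hgq hS1u hS1l hL2u hL2l
      · push_neg at h1
        obtain ⟨hL1l, hL1u⟩ := hL x₁ r₁ hr₁ h1.le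
        obtain ⟨hL2l, hL2u⟩ := hL x₂ r₂ hr₂ h2.le
        have hKC : KL^2 ≤ KK^2 := by
          have := le_max_right KS KL
          nlinarith
        exact ratio_same hKL1 hKC hv₁0 hv₂0 hv₁₂ hfq hgq hL1u hL1l hL2u hL2l
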